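/- arXiv:1908.10684 — 2 statements merged into one kernel-verified Lean document; each statement's English description precedes it below -/
import Mathlib

section
/- Let $R_o$ have CDF $F_{R_o}(r) = 1 - \exp(-\pi \rho \lambda r^2)$ for $r \ge 0$ (with $\rho, \lambda > 0$), and suppose the conditional CDF of $R_1$ given $R_o = r$ is $F_{R_1}(v \mid r) = 1 - \exp(-\pi\lambda\rho(v^2 - r^2))$ for $v \ge r$. Then the marginal CDF of $R_1$ is $F_{R_1}(v) = 1 - (\pi\lambda\rho v^2 + 1)\exp(-\pi\lambda\rho v^2)$ for $v \ge 0$. -/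
open MeasureTheory Real

lemma aux_integral (c : ℝ) (v : ℝ) (hv : 0 ≤ v) :
    (∫ r in Set.Icc (0:ℝ) v,
        (1 - Real.exp (-c * (v ^ 2 - r ^ 2))) * (2 * c * r * Real.exp (-c * r ^ 2)))
      = 1 - (c * v ^ 2 + 1) * Real.exp (-c * v ^ 2) := by
  set f : ℝ → ℝ := fun r =>
    (1 - Real.exp (-c * (v ^ 2 - r ^ 2))) * (2 * c * r * Real.exp (-c * r ^ 2)) with hf
  set G : ℝ → ℝ := fun r => -Real.exp (-c * r ^ 2) - c * r ^ 2 * Real.exp (-c * v ^ 2) with hG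
  have hderiv : ∀ x ∈ Set.uIcc (0:ℝ) v, HasDerivAt G (f x) x := by
    intro x _
    have h1 : HasDerivAt (fun r : ℝ => -c * r ^ 2) (-c * (2 * x)) x := by
      simpa using ((hasDerivAt_pow 2 x).const_mul (-c))
    have h2 : HasDerivAt (fun r : ℝ => Real.exp (-c * r ^ 2))
        (Real.exp (-c * x ^ 2) * (-c * (2 * x))) x := h1.exp
    have h4 : HasDerivAt (fun r : ℝ => c * r ^ 2 * Real.exp (-c * v ^ 2))
        ((c * (2 * x)) * Real.exp (-c * v ^ 2)) x := by
      have h := (((hasDerivAt_pow 2 x).const_mul c).mul_const (Real.exp (-c * v ^ 2)))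
      exact h.congr_deriv (by ring)
    have h3 : HasDerivAt G
        (-(Real.exp (-c * x ^ 2) * (-c * (2 * x))) - (c * (2 * x)) * Real.exp (-c * v ^ 2)) x :=
      h2.neg.sub h4
    convert h3 using 1
    have hexp : Real.exp (-c * (v ^ 2 - x ^ 2)) * Real.exp (-c * x ^ 2)
        = Real.exp (-c * v ^ 2) := by
      rw [← Real.exp_add]; ring_nf
    simp only [hf]
    linear_combination (-(2 * c * x)) * hexp
  have hcont : IntervalIntegrable f volume 0 v := by
    apply Continuous.intervalIntegrable
    fun_prop
  have key : ∫ r in (0:ℝ)..v, f r = G v - G 0 :=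
    intervalIntegral.integral_eq_sub_of_hasDerivAt hderiv hcont
  have hset : (∫ r in Set.Icc (0:ℝ) v, f r) = ∫ r in (0:ℝ)..v, f r := by
    rw [intervalIntegral.integral_of_le hv, MeasureTheory.integral_Icc_eq_integral_Ioc]
  rw [hset, key]
  simp only [hG, ne_eq, OfNat.ofNat_ne_zero, not_false_eq_true, zero_pow, mul_zero, neg_zero,
    Real.exp_zero, zero_mul]
  ring

/-- Marginal CDF of the dominant interferer distance `R₁`, obtained by integrating the
conditional CDF given the link distance `R_o` against the density of `R_o`. -/
theorem stmt7 {Ω : Type*} [MeasurableSpace Ω] (P : Measure Ω) [IsProbabilityMeasure P]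
    (ρ lam : ℝ) (hρ : 0 < ρ) (hlam : 0 < lam) (Ro R1 : Ω → ℝ)
    (hRo : ∀ r : ℝ, (P {ω | Ro ω ≤ r}).toReal
      = if r < 0 then 0 else 1 - Real.exp (-(Real.pi * ρ * lam) * r ^ 2))
    (hR1 : ∀ v : ℝ, 0 ≤ v →
      (P {ω | R1 ω ≤ v}).toReal
        = ∫ r in Set.Icc (0:ℝ) v,
            (1 - Real.exp (-(Real.pi * lam * ρ) * (v ^ 2 - r ^ 2)))
              * (2 * Real.pi * ρ * lam * r * Real.exp (-(Real.pi * ρ * lam) * r ^ 2))) :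
    ∀ v : ℝ, 0 ≤ v →
      (P {ω | R1 ω ≤ v}).toReal
        = 1 - (Real.pi * lam * ρ * v ^ 2 + 1) * Real.exp (-(Real.pi * lam * ρ) * v ^ 2) := by
  intro v hv
  rw [hR1 v hv, ← aux_integral (Real.pi * lam * ρ) v hv]
  refine MeasureTheory.setIntegral_congr_fun measurableSet_Icc fun r _ => ?_
  have h1 : Real.pi * ρ * lam = Real.pi * lam * ρ := by ring
  rw [h1]
  ring_nf
end

section
/- For $\delta \in (0,1)$, $\tau > 0$, and $\rho > 0$, the double integral $(2\pi\lambda\rho)^2 \int_0^\infty \int_r^\infty \frac{\exp(-\pi\lambda r^2 \beta(\tau,r,v) - \pi\lambda\rho v^2)}{1 + \tau (r/v)^{1/\delta}} v\,\mathrm{d}v\, r\,\mathrm{d}r$, where $\beta(\tau,r,v) = \tau^{\delta}\int_{\tau^{-\delta}(v/r)^2}^{\infty}\frac{\mathrm{d}u}{1+u^{1/\delta}}$, equals $\rho^2 \tau^{-\delta} \int_0^{\tau^{\delta}} \frac{(\tilde\beta(t) + \rho)^{-2}}{1 + t^{1/\delta}}\,\mathrm{d}t$ with $\tilde\beta(t)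 = t\int_{t^{-1}}^{\infty}\frac{\mathrm{d}u}{1+u^{1/\delta}}$, and in particular is independent of $\lambda > 0$. -/
open MeasureTheory Real

/-- The function `β(τ,r,v)` appearing in the conditional interference Laplace transform. -/
noncomputable def betaFn (δ τ r v : ℝ) : ℝ :=
  τ ^ δ * ∫ u in Set.Ici (τ ^ (-δ) * (v / r) ^ 2), 1 / (1 + u ^ (1 / δ))

/-- The function `β̃(t) = t ∫_{t⁻¹}^∞ du/(1+u^{1/δ})`. -/
noncomputable def betaTilde (δ t : ℝ) : ℝ :=
  t * ∫ u in Set.Ici t⁻¹, 1 / (1 + u ^ (1 / δ))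

lemma aux_hfun_integrableOn {δ c : ℝ} (hδ0 : 0 < δ) (hδ1 : δ < 1) (hc : 0 < c) :
    IntegrableOn (fun u : ℝ => 1 / (1 + u ^ (1 / δ))) (Set.Ici c) := by
  have h1δ : 1 < 1/δ := by rw [lt_div_iff₀ hδ0]; linarith
  have hg : IntegrableOn (fun u : ℝ => u ^ (-(1/δ))) (Set.Ici c) := by
    rw [integrableOn_Ici_iff_integrableOn_Ioi]
    exact integrableOn_Ioi_rpow_of_lt (by linarith) hc
  refine hg.mono' ?_ ?_
  · refine (ContinuousOn.aestronglyMeasurable ?_ measurableSet_Ici)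
    refine ContinuousOn.div continuousOn_const ?_ ?_
    · exact continuousOn_const.add (ContinuousOn.rpow_const continuousOn_id
        (fun x hx => Or.inl (lt_of_lt_of_le hc hx).ne'))
    · intro x hx
      have : 0 < x ^ (1/δ) := rpow_pos_of_pos (lt_of_lt_of_le hc hx) _
      positivity
  · filter_upwards [ae_restrict_mem measurableSet_Ici] with u hu
    have hu0 : 0 < u := lt_of_lt_of_le hc hu
    have h1 : 0 < u ^ (1/δ) := rpow_pos_of_pos hu0 _
    rw [Real.norm_eq_abs, abs_of_nonneg (by positivity), rpow_neg hu0.le]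
    rw [div_le_iff₀ (by positivity)]
    rw [inv_mul_eq_div, le_div_iff₀ h1]
    nlinarith

lemma aux_moment_integral {b : ℝ} (hb : 0 < b) :
    ∫ r in Set.Ioi (0:ℝ), r ^ 3 * Real.exp (-b * r ^ 2) = (b ^ 2)⁻¹ / 2 := by
  have h := integral_rpow_mul_exp_neg_mul_rpow (p := 2) (q := 3) (b := b)
    (by norm_num) (by norm_num) hb
  have heq : ∫ r in Set.Ioi (0:ℝ), r ^ 3 * Real.exp (-b * r ^ 2)
      = ∫ x in Set.Ioi (0:ℝ), x ^ (3:ℝ) * Real.exp (-b * x ^ (2:ℝ)) := by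
    refine setIntegral_congr_fun measurableSet_Ioi (fun x hx => ?_)
    rw [show (3:ℝ) = ((3:ℕ):ℝ) by norm_num, rpow_natCast,
      show (2:ℝ) = ((2:ℕ):ℝ) by norm_num, rpow_natCast]
  rw [heq, h]
  rw [show (-(3+1)/2 : ℝ) = -2 by norm_num, rpow_neg hb.le,
    show ((3:ℝ)+1)/2 = 2 by norm_num, Real.Gamma_two,
    show ((2:ℝ) = ((2:ℕ):ℝ)) by norm_num, rpow_natCast]
  ring

lemma aux_moment_integrableOn {b : ℝ} (hb : 0 < b) :
    IntegrableOn (fun r : ℝ => r ^ 3 * Real.exp (-b * r ^ 2)) (Set.Ioi 0) := by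
  refine (integrableOn_rpow_mul_exp_neg_mul_sq hb (s := 3) (by norm_num)).congr_fun
    (fun x hx => ?_) measurableSet_Ioi
  beta_reduce
  rw [show (3:ℝ) = ((3:ℕ):ℝ) by norm_num, rpow_natCast]
set_option maxHeartbeats 1000000 in
lemma aux_subst (δ α τ lam ρ r : ℝ) (J : ℝ → ℝ) (hδ0 : 0 < δ) (hδ1 : δ < 1)
    (hα : δ = 2 / α) (hτ : 0 < τ) (hρ : 0 < ρ) (hlam : 0 < lam) (hr : 0 < r)
    (hJ : ∀ t ∈ Set.Ioc (0:ℝ) (τ ^ δ), J t⁻¹ = ∫ u in Set.Ici t⁻¹, 1 / (1 + u ^ (1 / δ))) :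
    (∫ v in Set.Ici r,
        (Real.exp (-(Real.pi * lam * r ^ 2 * betaFn δ τ r v) - Real.pi * lam * ρ * v ^ 2)
          / (1 + τ * (r / v) ^ α)) * v) * r
      = ∫ t in Set.Ioc (0:ℝ) (τ ^ δ),
          (1/2) * τ ^ δ * (t ^ 2)⁻¹ / (1 + t ^ (1/δ)) *
            (r ^ 3 * Real.exp (-(Real.pi * lam * τ ^ δ * (t * J t⁻¹ + ρ) / t) * r ^ 2)) := by
  have ha : (0:ℝ) < τ ^ δ := rpow_pos_of_pos hτ δ
  set a := τ ^ δ with ha_def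
  have hαval : α = 2 / δ := by
    have hα0 : α ≠ 0 := by rintro rfl; simp at hα; linarith
    field_simp at hα ⊢; linarith
  set C := r * Real.sqrt a with hC_def
  have hsa : 0 < Real.sqrt a := Real.sqrt_pos.mpr ha
  have hC : 0 < C := by positivity
  set f : ℝ → ℝ := fun t => C * (Real.sqrt t)⁻¹ with hf_def
  set f' : ℝ → ℝ := fun t => C * (-(1 / (2 * Real.sqrt t)) / (Real.sqrt t) ^ 2) with hf'_def
  -- image
  have himage : f '' Set.Ioc 0 a = Set.Ici r := by
    ext v
    constructor
    · rintro ⟨t, ⟨ht0, hta⟩, rfl⟩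
      have hst : 0 < Real.sqrt t := Real.sqrt_pos.mpr ht0
      have hle : Real.sqrt t ≤ Real.sqrt a := Real.sqrt_le_sqrt hta
      have h1 : r * Real.sqrt t ≤ C := by
        rw [hC_def]; exact mul_le_mul_of_nonneg_left hle hr.le
      simp only [Set.mem_Ici, hf_def]
      rw [← div_eq_mul_inv, le_div_iff₀ hst]
      linarith
    · intro hv
      have hv0 : 0 < v := lt_of_lt_of_le hr hv
      refine ⟨a * r ^ 2 / v ^ 2, ⟨by positivity, ?_⟩, ?_⟩
      · rw [div_le_iff₀ (by positivity)]
        have : r ^ 2 ≤ v ^ 2 := pow_le_pow_left₀ hr.le hv 2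
        nlinarith
      · have h1 : Real.sqrt (a * r ^ 2 / v ^ 2) = Real.sqrt a * r / v := by
          rw [Real.sqrt_div (by positivity), Real.sqrt_mul ha.le, Real.sqrt_sq hr.le,
            Real.sqrt_sq hv0.le]
        simp only [hf_def, h1, hC_def]
        field_simp
  have hderiv : ∀ t ∈ Set.Ioc (0:ℝ) a, HasDerivWithinAt f (f' t) (Set.Ioc 0 a) t := by
    intro t ht
    have ht0 : 0 < t := ht.1
    have hst : Real.sqrt t ≠ 0 := (Real.sqrt_pos.mpr ht0).ne'
    exact (((Real.hasDerivAt_sqrt ht0.ne').inv hst).const_mul C).hasDerivWithinAt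
  have hinj : Set.InjOn f (Set.Ioc 0 a) := by
    intro t1 h1 t2 h2 heq
    have e1 : (Real.sqrt t1)⁻¹ = (Real.sqrt t2)⁻¹ := mul_left_cancel₀ hC.ne' heq
    have e2 : Real.sqrt t1 = Real.sqrt t2 := inv_injective e1
    have := congrArg (fun x : ℝ => x ^ 2) e2
    simpa [Real.sq_sqrt h1.1.le, Real.sq_sqrt h2.1.le] using this
  have key := integral_image_eq_integral_abs_deriv_smul measurableSet_Ioc hderiv hinj
    (fun v => (Real.exp (-(Real.pi * lam * r ^ 2 * betaFn δ τ r v) - Real.pi * lam * ρ * v ^ 2)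
          / (1 + τ * (r / v) ^ α)) * v)
  rw [← himage, key, ← integral_mul_const]
  refine setIntegral_congr_fun measurableSet_Ioc (fun t ht => ?_)
  obtain ⟨ht0, hta⟩ := ht
  have hs : 0 < Real.sqrt t := Real.sqrt_pos.mpr ht0
  set s := Real.sqrt t with hs_def
  have hs2 : s ^ 2 = t := Real.sq_sqrt ht0.le
  have hsa2 : Real.sqrt a ^ 2 = a := Real.sq_sqrt ha.le
  have hft : f t = C * s⁻¹ := rfl
  have hD : (0:ℝ) < 1 + t ^ (1/δ) := by
    have := Real.rpow_pos_of_pos ht0 (1/δ); linarith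
  -- lower endpoint
  have hlow : τ ^ (-δ) * (f t / r) ^ 2 = t⁻¹ := by
    have h1 : f t / r = Real.sqrt a / s := by
      rw [hft, hC_def]; field_simp
    rw [h1, Real.rpow_neg hτ.le, ← ha_def, div_pow, hs2, hsa2]
    field_simp
  have hbeta : betaFn δ τ r (f t) = a * J t⁻¹ := by
    rw [betaFn, hlow, ← ha_def, hJ t ⟨ht0, hta⟩]
  have hfsq : f t ^ 2 = r ^ 2 * a / t := by
    rw [hft, mul_pow, inv_pow, hs2, hC_def, mul_pow, hsa2]
    ring
  have hdenom : τ * (r / f t) ^ α = t ^ (1/δ) := by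
    have h1 : r / f t = Real.sqrt (t / a) := by
      rw [Real.sqrt_div ht0.le, ← hs_def, hft, hC_def]
      field_simp
    have h2 : ((1:ℝ)/2) * α = 1/δ := by
      rw [hαval]; field_simp
    have h3 : a ^ (1/δ) = τ := by
      rw [ha_def, ← Real.rpow_mul hτ.le, mul_one_div, div_self hδ0.ne', Real.rpow_one]
    rw [h1, Real.sqrt_eq_rpow, ← Real.rpow_mul (div_nonneg ht0.le ha.le), h2,
      Real.div_rpow ht0.le ha.le, h3]
    field_simp
  have hexp : -(Real.pi * lam * r ^ 2 * (a * J t⁻¹)) - Real.pi * lam * ρ * (r ^ 2 * a / t)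
      = -(Real.pi * lam * a * (t * J t⁻¹ + ρ) / t) * r ^ 2 := by
    field_simp
    ring
  have habs : |f' t| = C / (2 * s * t) := by
    have h1 : f' t = -(C / (2 * s * t)) := by
      show C * (-(1 / (2 * s)) / s ^ 2) = _
      rw [hs2]; field_simp
    rw [h1, abs_neg, abs_of_pos (by positivity)]
  show |f' t| • ((Real.exp (-(Real.pi * lam * r ^ 2 * betaFn δ τ r (f t)) -
      Real.pi * lam * ρ * f t ^ 2) / (1 + τ * (r / f t) ^ α)) * f t) * r = _
  rw [hbeta, hfsq, hdenom, hexp, habs, smul_eq_mul, hft]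
  set dd := 1 + t ^ (1/δ) with hdd_def
  set ex := Real.exp (-(Real.pi * lam * a * (t * J t⁻¹ + ρ) / t) * r ^ 2) with hex_def
  rw [hC_def, ← hs2, ← hsa2]
  have hD' : dd ≠ 0 := hD.ne'
  field_simp
  rw [Real.sqrt_sq hsa.le]


set_option maxHeartbeats 1000000 in
/-- Deconditioning step of Theorem 2: the double integral over the link distance `r` and the
dominant-interferer distance `v` reduces, via `t = τ^δ (r/v)²`, to a single integral that is
independent of the BS density `λ`. -/
theorem stmt12 (δ α τ ρ lam : ℝ) (hδ : δ ∈ Set.Ioo (0:ℝ) 1) (hα : δ = 2 / α)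
    (hτ : 0 < τ) (hρ : 0 < ρ) (hlam : 0 < lam) :
    (2 * Real.pi * lam * ρ) ^ 2 *
        ∫ r in Set.Ioi (0:ℝ),
          (∫ v in Set.Ici r,
            (Real.exp (-(Real.pi * lam * r ^ 2 * betaFn δ τ r v) - Real.pi * lam * ρ * v ^ 2)
              / (1 + τ * (r / v) ^ α)) * v) * r
      = ρ ^ 2 * τ ^ (-δ) *
          ∫ t in Set.Ioc (0:ℝ) (τ ^ δ), ((betaTilde δ t + ρ) ^ 2)⁻¹ / (1 + t ^ (1 / δ)) := by
  obtain ⟨hδ0, hδ1⟩ := hδ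
  have ha : (0:ℝ) < τ ^ δ := rpow_pos_of_pos hτ δ
  set a := τ ^ δ with ha_def
  have hπ : (0:ℝ) < Real.pi := Real.pi_pos
  -- the truncated tail-integral function
  set J : ℝ → ℝ := fun x => ∫ u in Set.Ici (max x a⁻¹), 1 / (1 + u ^ (1 / δ)) with hJ_def
  have hIa : (0:ℝ) < a⁻¹ := by positivity
  have hJanti : Antitone J := by
    intro x y hxy
    refine setIntegral_mono_set (aux_hfun_integrableOn hδ0 hδ1
      (lt_of_lt_of_le hIa (le_max_right _ _))) ?_ ?_
    · filter_upwards [ae_restrict_mem measurableSet_Ici] with u hu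
      have hu0 : 0 < u := lt_of_lt_of_le (lt_of_lt_of_le hIa (le_max_right _ _)) hu
      have : 0 < u ^ (1/δ) := rpow_pos_of_pos hu0 _
      positivity
    · exact HasSubset.Subset.eventuallyLE (Set.Ici_subset_Ici.mpr
        (max_le_max hxy le_rfl))
  have hJmeas : Measurable J := hJanti.measurable
  have hJ0 : ∀ x, 0 ≤ J x := by
    intro x
    refine setIntegral_nonneg measurableSet_Ici (fun u hu => ?_)
    have hu0 : 0 < u := lt_of_lt_of_le (lt_of_lt_of_le hIa (le_max_right _ _)) hu
    have : 0 < u ^ (1/δ) := rpow_pos_of_pos hu0 _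
    positivity
  have hJeq : ∀ t ∈ Set.Ioc (0:ℝ) a, J t⁻¹ = ∫ u in Set.Ici t⁻¹, 1 / (1 + u ^ (1 / δ)) := by
    intro t ht
    have h1 : a⁻¹ ≤ t⁻¹ := by
      rw [inv_le_inv₀ ha ht.1]; exact ht.2
    rw [hJ_def]
    simp only [max_eq_left h1]
  have hBT : ∀ t ∈ Set.Ioc (0:ℝ) a, betaTilde δ t = t * J t⁻¹ := by
    intro t ht
    rw [betaTilde, hJeq t ht]
  -- positivity of the exponent rate
  have hcpos : ∀ t ∈ Set.Ioc (0:ℝ) a, 0 < Real.pi * lam * a * (t * J t⁻¹ + ρ) / t := by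
    intro t ht
    have h1 : 0 < t * J t⁻¹ + ρ := by
      have := mul_nonneg ht.1.le (hJ0 t⁻¹); linarith
    have := ht.1
    positivity
  -- Step 1 : substitution in the inner integral
  have step1 : (∫ r in Set.Ioi (0:ℝ),
      (∫ v in Set.Ici r,
        (Real.exp (-(Real.pi * lam * r ^ 2 * betaFn δ τ r v) - Real.pi * lam * ρ * v ^ 2)
          / (1 + τ * (r / v) ^ α)) * v) * r)
      = ∫ r in Set.Ioi (0:ℝ), ∫ t in Set.Ioc (0:ℝ) a,
          (1/2) * a * (t ^ 2)⁻¹ / (1 + t ^ (1/δ)) *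
            (r ^ 3 * Real.exp (-(Real.pi * lam * a * (t * J t⁻¹ + ρ) / t) * r ^ 2)) := by
    refine setIntegral_congr_fun measurableSet_Ioi (fun r hr => ?_)
    exact aux_subst δ α τ lam ρ r J hδ0 hδ1 hα hτ hρ hlam hr hJeq
  rw [step1]
  -- measurability of the two-variable integrand
  set F : ℝ × ℝ → ℝ := fun p =>
    (1/2) * a * (p.2 ^ 2)⁻¹ / (1 + p.2 ^ (1/δ)) *
      (p.1 ^ 3 * Real.exp (-(Real.pi * lam * a * (p.2 * J p.2⁻¹ + ρ) / p.2) * p.1 ^ 2))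
    with hF_def
  have hFmeas : Measurable F := by
    have h1 : Measurable fun t : ℝ => J t⁻¹ := hJmeas.comp measurable_inv
    fun_prop
  have hFsm : AEStronglyMeasurable F
      ((volume.restrict (Set.Ioi (0:ℝ))).prod (volume.restrict (Set.Ioc (0:ℝ) a))) :=
    hFmeas.aestronglyMeasurable
  -- for each good t, the r-integral
  have hInner : ∀ t ∈ Set.Ioc (0:ℝ) a,
      ∫ r in Set.Ioi (0:ℝ), F (r, t)
        = (1/2) * a * (t ^ 2)⁻¹ / (1 + t ^ (1/δ)) *
            (((Real.pi * lam * a * (t * J t⁻¹ + ρ) / t) ^ 2)⁻¹ / 2) := by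
    intro t ht
    simp only [hF_def]
    rw [integral_const_mul, aux_moment_integral (hcpos t ht)]
  have hInnerInt : ∀ t ∈ Set.Ioc (0:ℝ) a,
      Integrable (fun r => F (r, t)) (volume.restrict (Set.Ioi (0:ℝ))) := by
    intro t ht
    simp only [hF_def]
    exact (aux_moment_integrableOn (hcpos t ht)).const_mul _
  have hFnonneg : ∀ r ∈ Set.Ioi (0:ℝ), ∀ t ∈ Set.Ioc (0:ℝ) a, 0 ≤ F (r, t) := by
    intro r hr t ht
    have h1 : 0 < t ^ (1/δ) := rpow_pos_of_pos ht.1 _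
    have h2 := ht.1
    have h3 := Real.exp_pos (-(Real.pi * lam * a * (t * J t⁻¹ + ρ) / t) * r ^ 2)
    have h4 : (0:ℝ) < r := hr
    simp only [hF_def]
    positivity
  -- value of ∫ r ‖F (r,t)‖ and its bound
  have hNormInt : ∀ t ∈ Set.Ioc (0:ℝ) a,
      (∫ r in Set.Ioi (0:ℝ), ‖F (r, t)‖)
        = (1/2) * a * (t ^ 2)⁻¹ / (1 + t ^ (1/δ)) *
            (((Real.pi * lam * a * (t * J t⁻¹ + ρ) / t) ^ 2)⁻¹ / 2) := by
    intro t ht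
    rw [← hInner t ht]
    refine setIntegral_congr_fun measurableSet_Ioi (fun r hr => ?_)
    exact Real.norm_of_nonneg (hFnonneg r hr t ht)
  have hBound : ∀ t ∈ Set.Ioc (0:ℝ) a,
      (1/2) * a * (t ^ 2)⁻¹ / (1 + t ^ (1/δ)) *
          (((Real.pi * lam * a * (t * J t⁻¹ + ρ) / t) ^ 2)⁻¹ / 2)
        ≤ a⁻¹ / (4 * Real.pi ^ 2 * lam ^ 2 * ρ ^ 2) := by
    intro t ht
    have ht0 : 0 < t := ht.1
    have hJt : 0 ≤ t * J t⁻¹ := mul_nonneg ht0.le (hJ0 t⁻¹)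
    have hBρ : 0 < t * J t⁻¹ + ρ := by linarith
    have hD : 0 < 1 + t ^ (1/δ) := by
      have := rpow_pos_of_pos ht0 (1/δ); linarith
    set B := t * J t⁻¹ + ρ with hB_def
    set dd := 1 + t ^ (1/δ) with hdd_def
    have hBne : B ≠ 0 := hBρ.ne'
    have hddne : dd ≠ 0 := hD.ne'
    have e1 : (1/2) * a * (t ^ 2)⁻¹ / dd *
          (((Real.pi * lam * a * B / t) ^ 2)⁻¹ / 2)
        = a⁻¹ / (4 * Real.pi ^ 2 * lam ^ 2) * ((B ^ 2)⁻¹ * dd⁻¹) := by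
      field_simp
      ring
    rw [e1]
    have h2 : (B ^ 2)⁻¹ * dd⁻¹ ≤ (ρ ^ 2)⁻¹ := by
      have h3 : ρ ^ 2 ≤ B ^ 2 := by rw [hB_def]; nlinarith
      have h4 : (B ^ 2)⁻¹ ≤ (ρ ^ 2)⁻¹ := by
        exact inv_anti₀ (by positivity) h3
      have h5 : dd⁻¹ ≤ 1 := by
        rw [inv_le_one_iff₀]; right
        rw [hdd_def]; linarith [rpow_pos_of_pos ht0 (1/δ)]
      calc (B ^ 2)⁻¹ * dd⁻¹
          ≤ (ρ ^ 2)⁻¹ * 1 := by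
            exact mul_le_mul h4 h5 (by positivity) (by positivity)
        _ = (ρ ^ 2)⁻¹ := mul_one _
    calc a⁻¹ / (4 * Real.pi ^ 2 * lam ^ 2) * ((B ^ 2)⁻¹ * dd⁻¹)
        ≤ a⁻¹ / (4 * Real.pi ^ 2 * lam ^ 2) * (ρ ^ 2)⁻¹ := by
          refine mul_le_mul_of_nonneg_left h2 (by positivity)
      _ = a⁻¹ / (4 * Real.pi ^ 2 * lam ^ 2 * ρ ^ 2) := by field_simp
  -- Fubini
  have hIntF : Integrable F
      ((volume.restrict (Set.Ioi (0:ℝ))).prod (volume.restrict (Set.Ioc (0:ℝ) a))) := by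
    rw [MeasureTheory.integrable_prod_iff' hFsm]
    constructor
    · filter_upwards [ae_restrict_mem measurableSet_Ioc] with t ht
      exact hInnerInt t ht
    · refine Integrable.mono' (g := fun _ => a⁻¹ / (4 * Real.pi ^ 2 * lam ^ 2 * ρ ^ 2))
        (integrable_const _) ?_ ?_
      · exact (hFsm.norm.prod_swap.integral_prod_right')
      · filter_upwards [ae_restrict_mem measurableSet_Ioc] with t ht
        rw [Real.norm_of_nonneg (by positivity : (0:ℝ) ≤ ∫ r in Set.Ioi (0:ℝ), ‖F (r, t)‖)]
        rw [hNormInt t ht]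
        exact hBound t ht
  have swap := MeasureTheory.integral_integral_swap (f := fun r t => F (r, t))
    (μ := volume.restrict (Set.Ioi (0:ℝ))) (ν := volume.restrict (Set.Ioc (0:ℝ) a)) hIntF
  simp only [hF_def] at swap
  rw [swap]
  -- compute the inner r-integral
  have step3 : ∫ t in Set.Ioc (0:ℝ) a, ∫ r in Set.Ioi (0:ℝ),
        (1/2) * a * (t ^ 2)⁻¹ / (1 + t ^ (1/δ)) *
          (r ^ 3 * Real.exp (-(Real.pi * lam * a * (t * J t⁻¹ + ρ) / t) * r ^ 2))
      = ∫ t in Set.Ioc (0:ℝ) a,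
          (1/2) * a * (t ^ 2)⁻¹ / (1 + t ^ (1/δ)) *
            (((Real.pi * lam * a * (t * J t⁻¹ + ρ) / t) ^ 2)⁻¹ / 2) := by
    refine setIntegral_congr_fun measurableSet_Ioc (fun t ht => ?_)
    rw [integral_const_mul, aux_moment_integral (hcpos t ht)]
  rw [step3]
  -- final pointwise identification
  rw [← MeasureTheory.integral_const_mul, ← MeasureTheory.integral_const_mul]
  refine setIntegral_congr_fun measurableSet_Ioc (fun t ht => ?_)
  have ht0 : 0 < t := ht.1
  have hJt : 0 ≤ t * J t⁻¹ := mul_nonneg ht0.le (hJ0 t⁻¹)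
  have hBρ : 0 < t * J t⁻¹ + ρ := by linarith
  have hD : 0 < 1 + t ^ (1/δ) := by
    have := rpow_pos_of_pos ht0 (1/δ); linarith
  rw [hBT t ht, Real.rpow_neg hτ.le, ← ha_def]
  set B := t * J t⁻¹ + ρ with hB_def
  set dd := 1 + t ^ (1/δ) with hdd_def
  have hBne : B ≠ 0 := hBρ.ne'
  have hddne : dd ≠ 0 := hD.ne'
  show (2 * Real.pi * lam * ρ) ^ 2 *
      ((1:ℝ)/2 * a * (t ^ 2)⁻¹ / dd * (((Real.pi * lam * a * B / t) ^ 2)⁻¹ / 2))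
    = ρ ^ 2 * a⁻¹ * ((B ^ 2)⁻¹ / dd)
  field_simp
end
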